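/- arXiv:1406.2111 — 4 statements merged into one kernel-verified Lean document; each statement's English description precedes it below -/
import Mathlib

section
/- Let n ≥ 3 and 1 ≤ ℓ ≤ n−2 be integers. In the game in which two players alternately claim previously unclaimed edges of the complete graph K_n (one edge per move, with no further restrictions), starting from the empty graph on n vertices, either player (whether moving first or second) has a strategy ensuring that, immediately after some move of his, the graph G consisting of all claimed edges contains a path P such that: (a) the length of P is either ℓ or ℓ+1; (b) every vertex of G not on P has degree 0 in G; and (c) at least one of the two endpoints of P has degree exactly 1 in G. -/
open SimpleGraph

/-- The graph obtained from `G` by adding the edge `e`. -/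
def addEdge {V : Type*} (G : SimpleGraph V) (e : Sym2 V) : SimpleGraph V :=
  G ⊔ SimpleGraph.fromEdgeSet {e}

/-- `CanBuild Q turn G`: in the unrestricted game on `Kₙ` where the two players
alternately claim previously unclaimed edges (the protagonist moving iff `turn = true`,
each move being any non-loop pair not yet claimed), starting from the position `G` of
already-claimed edges, the protagonist has a strategy ensuring that at some point,
immediately after one of his own moves, the graph of claimed edges satisfies `Q`. -/
inductive CanBuild {V : Type*} (Q : SimpleGraph V → Prop) : Bool → SimpleGraph V → Prop
  | achieve (G : SimpleGraph V) (e : Sym2 V) (hd : ¬ e.IsDiag) (hfree : e ∉ G.edgeSet)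
      (hQ : Q (addEdge G e)) : CanBuild Q true G
  | step (G : SimpleGraph V) (e : Sym2 V) (hd : ¬ e.IsDiag) (hfree : e ∉ G.edgeSet)
      (h : CanBuild Q false (addEdge G e)) : CanBuild Q true G
  | respond (G : SimpleGraph V) (e₀ : Sym2 V) (hd₀ : ¬ e₀.IsDiag) (hfree₀ : e₀ ∉ G.edgeSet)
      (h : ∀ e : Sym2 V, ¬ e.IsDiag → e ∉ G.edgeSet →
        CanBuild Q true (addEdge G e)) : CanBuild Q false G

section Helpers
variable {V : Type*} (G : SimpleGraph V)

lemma addEdge_adj (x y a b : V) :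
    (addEdge G s(x,y)).Adj a b ↔ G.Adj a b ∨ ((a = x ∧ b = y ∨ a = y ∧ b = x) ∧ a ≠ b) := by
  simp [addEdge, Sym2.eq_iff]

lemma le_addEdge (e : Sym2 V) : G ≤ addEdge G e := le_sup_left

lemma neighborSet_addEdge_of_ne (x y w : V) (hx : w ≠ x) (hy : w ≠ y) :
    (addEdge G s(x,y)).neighborSet w = G.neighborSet w := by
  ext a; simp [neighborSet, addEdge_adj, hx, hy]

lemma neighborSet_addEdge₂_of_ne (x y a b w : V) (hx : w ≠ x) (hy : w ≠ y)
    (ha : w ≠ a) (hb : w ≠ b) :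
    (addEdge (addEdge G s(x,y)) s(a,b)).neighborSet w = G.neighborSet w := by
  rw [neighborSet_addEdge_of_ne _ _ _ _ ha hb, neighborSet_addEdge_of_ne _ _ _ _ hx hy]

lemma neighborSet_fresh (x y a z : V) (hGz : G.neighborSet z = ∅)
    (hzx : z ≠ x) (hzy : z ≠ y) (hza : z ≠ a) :
    (addEdge (addEdge G s(x,y)) s(z,a)).neighborSet z = {a} := by
  have hz : ∀ b, ¬ G.Adj z b := by
    intro b hb
    have : b ∈ G.neighborSet z := hb
    simp [hGz] at this
  ext b
  simp only [mem_neighborSet, addEdge_adj, Set.mem_singleton_iff, hz b, false_or]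
  constructor
  · rintro (⟨⟨h1,h2⟩|⟨h1,h2⟩, h3⟩|⟨⟨h1,h2⟩|⟨h1,h2⟩, h3⟩) <;> first | exact h2 | exact absurd h1 (by tauto)
  · rintro rfl
    tauto

lemma not_adj_of_isolated {w : V} (hGw : G.neighborSet w = ∅) (a : V) : ¬ G.Adj a w := by
  intro h
  have : a ∈ G.neighborSet w := h.symm
  simp [hGw] at this

end Helpers

lemma support_mapLe {V : Type*} {G G' : SimpleGraph V} (h : G ≤ G') {u v : V} (p : G.Walk u v) :
    (p.mapLe h).support = p.support := by
  induction p with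
  | nil => rfl
  | cons h p ih => simpa using ih

lemma length_mapLe {V : Type*} {G G' : SimpleGraph V} (h : G ≤ G') {u v : V} (p : G.Walk u v) :
    (p.mapLe h).length = p.length := by
  induction p with
  | nil => rfl
  | cons h p ih => simp only [Walk.mapLe] at *; simp [ih]

lemma exists_fresh {n : ℕ} (s : Finset (Fin n)) (h : s.card < n) : ∃ z, z ∉ s := by
  by_contra hc
  push_neg at hc
  have : s = Finset.univ := Finset.eq_univ_iff_forall.2 hc
  simp [this] at h

lemma ne_of_path {V : Type*} {G : SimpleGraph V} {u v : V} {p : G.Walk u v}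
    (hp : p.IsPath) (hlen : 1 ≤ p.length) : u ≠ v := by
  rintro rfl
  rw [Walk.isPath_iff_eq_nil] at hp
  simp [hp] at hlen

def InvP {n : ℕ} (G : SimpleGraph (Fin n)) (k : ℕ) : Prop :=
  ∃ (u v : Fin n) (p : G.Walk u v), p.IsPath ∧ p.length = k ∧
    (∀ w, w ∉ p.support → G.neighborSet w = ∅) ∧ (G.neighborSet u).ncard = 1

def RespP {n : ℕ} (G : SimpleGraph (Fin n)) (k : ℕ) : Prop :=
  ∃ (f : Sym2 (Fin n)) (k' : ℕ), ¬ f.IsDiag ∧ f ∉ G.edgeSet ∧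
    (k' = k + 1 ∨ k' = k + 2) ∧ InvP (addEdge G f) k'

lemma support_card_le {n : ℕ} {G : SimpleGraph (Fin n)} {u v : Fin n} (p : G.Walk u v) :
    p.support.toFinset.card ≤ p.length + 1 := by
  calc p.support.toFinset.card ≤ p.support.length := List.toFinset_card_le _
  _ = p.length + 1 := p.length_support

lemma respond_endpoint {n : ℕ} {G : SimpleGraph (Fin n)} {x w : Fin n} (p : G.Walk x w)
    (hp : p.IsPath) {k : ℕ} (hlen : p.length = k) (hcard : k + 3 ≤ n)
    (hspan : ∀ z, z ∉ p.support → G.neighborSet z = ∅)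
    {y : Fin n} (hy : y ∉ p.support) :
    RespP (addEdge G s(x,y)) k := by
  have hxy : x ≠ y := fun h => hy (h ▸ p.start_mem_support)
  obtain ⟨z, hz⟩ : ∃ z, z ∉ insert y p.support.toFinset := by
    apply exists_fresh
    calc (insert y p.support.toFinset).card ≤ p.support.toFinset.card + 1 :=
          Finset.card_insert_le _ _
    _ ≤ k + 2 := by have := support_card_le p; omega
    _ < n := by omega
  simp only [Finset.mem_insert, List.mem_toFinset, not_or] at hz
  obtain ⟨hzy, hzs⟩ := hz
  have hzx : z ≠ x := fun h => hzs (h ▸ p.start_mem_support)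
  have hGz : G.neighborSet z = ∅ := hspan z hzs
  have hGy : G.neighborSet y = ∅ := hspan y hy
  refine ⟨s(z,y), k + 2, by simp [hzy], ?_, Or.inr rfl, ?_⟩
  · rw [mem_edgeSet, addEdge_adj]
    rintro (h | ⟨(⟨h1, -⟩ | ⟨h1, -⟩), -⟩)
    · exact not_adj_of_isolated G hGy z h
    · exact hzx h1
    · exact hzy h1
  · set G1 := addEdge G s(x,y) with hG1
    set G2 := addEdge G1 s(z,y) with hG2
    have hle : G ≤ G2 := le_trans (le_addEdge G _) (le_addEdge G1 _)
    have h1 : G2.Adj z y := by rw [hG2, addEdge_adj]; exact Or.inr ⟨Or.inl ⟨rfl, rfl⟩, hzy⟩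
    have h2 : G2.Adj y x := by
      rw [hG2, addEdge_adj]
      left
      rw [hG1, addEdge_adj]
      exact Or.inr ⟨Or.inr ⟨rfl, rfl⟩, hxy.symm⟩
    refine ⟨z, w, Walk.cons h1 (Walk.cons h2 (p.mapLe hle)), ?_, ?_, ?_, ?_⟩
    · rw [Walk.cons_isPath_iff, Walk.cons_isPath_iff]
      refine ⟨⟨hp.mapLe _, by rwa [support_mapLe]⟩, ?_⟩
      rw [Walk.support_cons, support_mapLe]
      simp [hzy, hzs]
    · simp [length_mapLe, hlen]
    · intro w' hw'
      rw [Walk.support_cons, Walk.support_cons, support_mapLe] at hw'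
      simp only [List.mem_cons, not_or] at hw'
      obtain ⟨hw'z, hw'y, hw's⟩ := hw'
      have hw'x : w' ≠ x := fun h => hw's (h ▸ p.start_mem_support)
      rw [hG2, hG1, neighborSet_addEdge₂_of_ne G x y z y w' hw'x hw'y hw'z hw'y]
      exact hspan w' hw's
    · rw [hG2, hG1, neighborSet_fresh G x y y z hGz hzx hzy hzy]
      exact Set.ncard_singleton _

lemma respond_chord {n : ℕ} {G : SimpleGraph (Fin n)} {u v : Fin n} (p : G.Walk u v)
    (hp : p.IsPath) {k : ℕ} (hlen : p.length = k) (hcard : k + 3 ≤ n)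
    (hspan : ∀ z, z ∉ p.support → G.neighborSet z = ∅)
    {x y : Fin n} (hxy : x ≠ y) (hx : x ∈ p.support) (hy : y ∈ p.support) :
    RespP (addEdge G s(x,y)) k := by
  obtain ⟨z, hzs⟩ : ∃ z, z ∉ p.support.toFinset := by
    apply exists_fresh
    have := support_card_le p
    omega
  rw [List.mem_toFinset] at hzs
  have hzx : z ≠ x := fun h => hzs (h ▸ hx)
  have hzy : z ≠ y := fun h => hzs (h ▸ hy)
  have hzu : z ≠ u := fun h => hzs (h ▸ p.start_mem_support)
  have hGz : G.neighborSet z = ∅ := hspan z hzs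
  refine ⟨s(z,u), k + 1, by simp [hzu], ?_, Or.inl rfl, ?_⟩
  · rw [mem_edgeSet, addEdge_adj]
    rintro (h | ⟨(⟨h1, -⟩ | ⟨h1, -⟩), -⟩)
    · exact not_adj_of_isolated G hGz u h.symm
    · exact hzx h1
    · exact hzy h1
  · set G1 := addEdge G s(x,y) with hG1
    set G2 := addEdge G1 s(z,u) with hG2
    have hle : G ≤ G2 := le_trans (le_addEdge G _) (le_addEdge G1 _)
    have h1 : G2.Adj z u := by rw [hG2, addEdge_adj]; exact Or.inr ⟨Or.inl ⟨rfl, rfl⟩, hzu⟩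
    refine ⟨z, v, Walk.cons h1 (p.mapLe hle), ?_, ?_, ?_, ?_⟩
    · rw [Walk.cons_isPath_iff, support_mapLe]
      exact ⟨hp.mapLe _, hzs⟩
    · simp [length_mapLe, hlen]
    · intro w' hw'
      rw [Walk.support_cons, support_mapLe] at hw'
      simp only [List.mem_cons, not_or] at hw'
      obtain ⟨hw'z, hw's⟩ := hw'
      have hw'x : w' ≠ x := fun h => hw's (h ▸ hx)
      have hw'y : w' ≠ y := fun h => hw's (h ▸ hy)
      have hw'u : w' ≠ u := fun h => hw's (h ▸ p.start_mem_support)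
      rw [hG2, hG1, neighborSet_addEdge₂_of_ne G x y z u w' hw'x hw'y hw'z hw'u]
      exact hspan w' hw's
    · rw [hG2, hG1, neighborSet_fresh G x y u z hGz hzx hzy hzu]
      exact Set.ncard_singleton _

lemma respond_internal {n : ℕ} {G : SimpleGraph (Fin n)} {u v : Fin n} (p : G.Walk u v)
    (hp : p.IsPath) {k : ℕ} (hlen : p.length = k) (hk1 : 1 ≤ k)
    (hspan : ∀ z, z ∉ p.support → G.neighborSet z = ∅)
    (hdeg : (G.neighborSet u).ncard = 1)
    {x y : Fin n} (hx : x ∈ p.support) (hxu : x ≠ u) (hxv : x ≠ v) (hy : y ∉ p.support) :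
    RespP (addEdge G s(x,y)) k := by
  have huv : u ≠ v := ne_of_path hp (hlen ▸ hk1)
  have hyu : y ≠ u := fun h => hy (h ▸ p.start_mem_support)
  have hyv : y ≠ v := fun h => hy (h ▸ p.end_mem_support)
  have hGy : G.neighborSet y = ∅ := hspan y hy
  refine ⟨s(v,y), k + 1, by simp [hyv.symm], ?_, Or.inl rfl, ?_⟩
  · rw [mem_edgeSet, addEdge_adj]
    rintro (h | ⟨(⟨h1, -⟩ | ⟨h1, -⟩), -⟩)
    · exact not_adj_of_isolated G hGy v h
    · exact hxv h1.symm
    · exact hyv h1.symm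
  · set G1 := addEdge G s(x,y) with hG1
    set G2 := addEdge G1 s(v,y) with hG2
    have hle : G ≤ G2 := le_trans (le_addEdge G _) (le_addEdge G1 _)
    have h1 : G2.Adj y v := by rw [hG2, addEdge_adj]; exact Or.inr ⟨Or.inr ⟨rfl, rfl⟩, hyv⟩
    refine ⟨u, y, (Walk.cons h1 (p.reverse.mapLe hle)).reverse, ?_, ?_, ?_, ?_⟩
    · apply Walk.IsPath.reverse
      rw [Walk.cons_isPath_iff, support_mapLe, Walk.support_reverse]
      exact ⟨hp.reverse.mapLe _, by simpa using hy⟩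
    · simp [length_mapLe, hlen]
    · intro w' hw'
      rw [Walk.support_reverse, List.mem_reverse, Walk.support_cons, support_mapLe,
        Walk.support_reverse] at hw'
      simp only [List.mem_cons, List.mem_reverse, not_or] at hw'
      obtain ⟨hw'y, hw's⟩ := hw'
      have hw'x : w' ≠ x := fun h => hw's (h ▸ hx)
      have hw'v : w' ≠ v := fun h => hw's (h ▸ p.end_mem_support)
      rw [hG2, hG1, neighborSet_addEdge₂_of_ne G x y v y w' hw'x hw'y hw'v hw'y]
      exact hspan w' hw's
    · rw [hG2, hG1, neighborSet_addEdge₂_of_ne G x y v y u hxu.symm hyu.symm huv hyu.symm]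
      exact hdeg

lemma respond_disjoint {n : ℕ} {G : SimpleGraph (Fin n)} {u v : Fin n} (p : G.Walk u v)
    (hp : p.IsPath) {k : ℕ} (hlen : p.length = k) (hk1 : 1 ≤ k)
    (hspan : ∀ z, z ∉ p.support → G.neighborSet z = ∅)
    (hdeg : (G.neighborSet u).ncard = 1)
    {x y : Fin n} (hxy : x ≠ y) (hx : x ∉ p.support) (hy : y ∉ p.support) :
    RespP (addEdge G s(x,y)) k := by
  have huv : u ≠ v := ne_of_path hp (hlen ▸ hk1)
  have hxu : x ≠ u := fun h => hx (h ▸ p.start_mem_support)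
  have hxv : x ≠ v := fun h => hx (h ▸ p.end_mem_support)
  have hyu : y ≠ u := fun h => hy (h ▸ p.start_mem_support)
  have hyv : y ≠ v := fun h => hy (h ▸ p.end_mem_support)
  have hGx : G.neighborSet x = ∅ := hspan x hx
  refine ⟨s(v,x), k + 2, by simp [hxv.symm], ?_, Or.inr rfl, ?_⟩
  · rw [mem_edgeSet, addEdge_adj]
    rintro (h | ⟨(⟨h1, -⟩ | ⟨h1, -⟩), -⟩)
    · exact not_adj_of_isolated G hGx v h
    · exact hxv h1.symm
    · exact hyv h1.symm
  · set G1 := addEdge G s(x,y) with hG1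
    set G2 := addEdge G1 s(v,x) with hG2
    have hle : G ≤ G2 := le_trans (le_addEdge G _) (le_addEdge G1 _)
    have h1 : G2.Adj x v := by rw [hG2, addEdge_adj]; exact Or.inr ⟨Or.inr ⟨rfl, rfl⟩, hxv⟩
    have h2 : G2.Adj y x := by
      rw [hG2, addEdge_adj]
      left
      rw [hG1, addEdge_adj]
      exact Or.inr ⟨Or.inr ⟨rfl, rfl⟩, hxy.symm⟩
    refine ⟨u, y, (Walk.cons h2 (Walk.cons h1 (p.reverse.mapLe hle))).reverse, ?_, ?_, ?_, ?_⟩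
    · apply Walk.IsPath.reverse
      rw [Walk.cons_isPath_iff, Walk.cons_isPath_iff, support_mapLe, Walk.support_reverse]
      refine ⟨⟨hp.reverse.mapLe _, by simpa using hx⟩, ?_⟩
      rw [Walk.support_cons, support_mapLe, Walk.support_reverse]
      simp [hxy.symm, hy]
    · simp [length_mapLe, hlen]
    · intro w' hw'
      rw [Walk.support_reverse, List.mem_reverse, Walk.support_cons, Walk.support_cons,
        support_mapLe, Walk.support_reverse] at hw'
      simp only [List.mem_cons, List.mem_reverse, not_or] at hw'
      obtain ⟨hw'y, hw'x, hw's⟩ := hw'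
      have hw'v : w' ≠ v := fun h => hw's (h ▸ p.end_mem_support)
      rw [hG2, hG1, neighborSet_addEdge₂_of_ne G x y v x w' hw'x hw'y hw'v hw'x]
      exact hspan w' hw's
    · rw [hG2, hG1, neighborSet_addEdge₂_of_ne G x y v x u hxu.symm hyu.symm huv hxu.symm]
      exact hdeg

lemma respond_main {n : ℕ} {G : SimpleGraph (Fin n)} {k : ℕ} (hcard : k + 3 ≤ n)
    (hk1 : 1 ≤ k) (hInv : InvP G k) {x y : Fin n} (hxy : x ≠ y)
    (hfree : s(x,y) ∉ G.edgeSet) : RespP (addEdge G s(x,y)) k := by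
  obtain ⟨u, v, p, hp, hlen, hspan, hdeg⟩ := hInv
  have key : ∀ a b : Fin n, a ∈ p.support → b ∉ p.support →
      RespP (addEdge G s(a,b)) k := by
    intro a b ha hb
    by_cases hau : a = u
    · subst hau
      exact respond_endpoint p hp hlen hcard hspan hb
    · by_cases hav : a = v
      · subst hav
        refine respond_endpoint p.reverse hp.reverse (by simpa using hlen) hcard ?_
          (by simpa using hb)
        intro z hz
        exact hspan z (by simpa using hz)
      · exact respond_internal p hp hlen hk1 hspan hdeg ha hau hav hb
  by_cases hx : x ∈ p.support <;> by_cases hy : y ∈ p.support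
  · exact respond_chord p hp hlen hcard hspan hxy hx hy
  · exact key x y hx hy
  · rw [show s(x,y) = s(y,x) from Sym2.eq_swap]
    exact key y x hy hx
  · exact respond_disjoint p hp hlen hk1 hspan hdeg hxy hx hy

abbrev Qpred (n ℓ : ℕ) : SimpleGraph (Fin n) → Prop := fun G =>
  ∃ (u v : Fin n) (p : G.Walk u v), p.IsPath ∧
    (p.length = ℓ ∨ p.length = ℓ + 1) ∧
    (∀ w : Fin n, w ∉ p.support → (G.neighborSet w).ncard = 0) ∧
    ((G.neighborSet u).ncard = 1 ∨ (G.neighborSet v).ncard = 1)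

lemma Q_of_InvP {n ℓ k : ℕ} {G : SimpleGraph (Fin n)} (h : InvP G k)
    (hk : k = ℓ ∨ k = ℓ + 1) : Qpred n ℓ G := by
  obtain ⟨u, v, p, hp, hlen, hspan, hdeg⟩ := h
  refine ⟨u, v, p, hp, by omega, fun w hw => by rw [hspan w hw]; simp, Or.inl hdeg⟩

lemma main_ind {n ℓ : ℕ} (hn : 3 ≤ n) (hl2 : ℓ ≤ n - 2) :
    ∀ m k (G : SimpleGraph (Fin n)), k + m + 1 = ℓ → 1 ≤ k → InvP G k →
      CanBuild (Qpred n ℓ) false G := by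
  intro m
  induction m using Nat.strong_induction_on with
  | _ m IH =>
    intro k G hkm hk1 hInv
    have hcard : k + 3 ≤ n := by omega
    obtain ⟨u, v, p, hp, hlen, hspan, hdeg⟩ := hInv
    obtain ⟨z, hzs⟩ : ∃ z, z ∉ p.support.toFinset := by
      apply exists_fresh
      have := support_card_le p
      omega
    rw [List.mem_toFinset] at hzs
    have huz : u ≠ z := fun h => hzs (h ▸ p.start_mem_support)
    refine CanBuild.respond G s(u,z) (by simp [huz]) ?_ ?_
    · rw [mem_edgeSet]
      intro h
      exact not_adj_of_isolated G (hspan z hzs) u h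
    · intro e hd hfree
      revert hd hfree
      refine Sym2.ind (fun x y => ?_) e
      intro hd hfree
      have hxy : x ≠ y := by simpa using hd
      have hR := respond_main hcard hk1 ⟨u, v, p, hp, hlen, hspan, hdeg⟩ hxy hfree
      obtain ⟨f, k', hdf, hffree, hk', hInv'⟩ := hR
      by_cases hwin : ℓ ≤ k'
      · exact CanBuild.achieve _ f hdf hffree (Q_of_InvP hInv' (by omega))
      · push_neg at hwin
        refine CanBuild.step _ f hdf hffree ?_
        exact IH (ℓ - k' - 1) (by omega) k' _ (by omega) (by omega) hInv'

lemma neighborSet_addEdge_bot_left {n : ℕ} (x y : Fin n) (hxy : x ≠ y) :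
    (addEdge (⊥ : SimpleGraph (Fin n)) s(x,y)).neighborSet x = {y} := by
  ext a
  simp only [mem_neighborSet, addEdge_adj, bot_adj, false_or, Set.mem_singleton_iff]
  constructor
  · rintro ⟨⟨-, rfl⟩ | ⟨h1, -⟩, -⟩
    · rfl
    · exact absurd h1 hxy
  · rintro rfl
    exact ⟨by tauto, hxy⟩

theorem statement_7' (n ℓ : ℕ) (hn : 3 ≤ n) (hl1 : 1 ≤ ℓ) (hl2 : ℓ ≤ n - 2) :
    ∀ turn : Bool, CanBuild (Qpred n ℓ) turn ⊥ := by
  obtain ⟨m, rfl⟩ : ∃ m, n = m + 3 := ⟨n - 3, by omega⟩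
  intro turn
  cases turn
  case false =>
    have h01 : (0 : Fin (m+3)) ≠ 1 := by simp [Fin.ext_iff]
    refine CanBuild.respond ⊥ s(0,1) (by simp [h01]) (by simp) ?_
    intro e hd hfree
    revert hd hfree
    refine Sym2.ind (fun x y => ?_) e
    intro hd _
    have hxy : x ≠ y := by simpa using hd
    obtain ⟨z, hz⟩ : ∃ z, z ∉ ({x, y} : Finset (Fin (m+3))) := by
      apply exists_fresh
      calc ({x, y} : Finset (Fin (m+3))).card ≤ 2 := le_trans (Finset.card_insert_le _ _) (by simp)
      _ < m + 3 := by omega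
    simp only [Finset.mem_insert, Finset.mem_singleton, not_or] at hz
    obtain ⟨hzx, hzy⟩ := hz
    set G1 := addEdge (⊥ : SimpleGraph (Fin (m+3))) s(x,y) with hG1
    set G2 := addEdge G1 s(y,z) with hG2
    have hfree2 : s(y,z) ∉ G1.edgeSet := by
      rw [mem_edgeSet, hG1, addEdge_adj]
      rintro (h | ⟨(⟨h1, -⟩ | ⟨-, h2⟩), -⟩)
      · exact h.elim
      · exact hxy h1.symm
      · exact hzx h2
    have hxz : x ≠ z := fun h => hzx h.symm
    have hyz : y ≠ z := fun h => hzy h.symm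
    have hadjxy : G2.Adj x y := by
      rw [hG2, addEdge_adj]
      left
      rw [hG1, addEdge_adj]
      exact Or.inr ⟨Or.inl ⟨rfl, rfl⟩, hxy⟩
    have hadjyz : G2.Adj y z := by
      rw [hG2, addEdge_adj]
      exact Or.inr ⟨Or.inl ⟨rfl, rfl⟩, hyz⟩
    have hInv2 : InvP G2 2 := by
      refine ⟨x, z, Walk.cons hadjxy (Walk.cons hadjyz Walk.nil), ?_, rfl, ?_, ?_⟩
      · rw [Walk.cons_isPath_iff, Walk.cons_isPath_iff]
        refine ⟨⟨Walk.IsPath.nil, by simp [hyz]⟩, ?_⟩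
        simp [hxy, hxz]
      · intro w hw
        simp only [Walk.support_cons, Walk.support_nil, List.mem_cons,
          List.mem_singleton, not_or] at hw
        obtain ⟨hwx, hwy, hwz, -⟩ := hw
        rw [hG2, hG1, neighborSet_addEdge₂_of_ne _ x y y z w hwx hwy hwy hwz]
        ext a
        simp
      · have : G2.neighborSet x = {y} := by
          ext a
          rw [hG2, hG1]
          simp only [mem_neighborSet, addEdge_adj, bot_adj, false_or, Set.mem_singleton_iff]
          constructor
          · rintro (⟨⟨-, rfl⟩ | ⟨h1, -⟩, -⟩ | ⟨(⟨h1, -⟩ | ⟨h1, -⟩), -⟩)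
            · rfl
            · exact absurd h1 hxy
            · exact absurd h1 hxy
            · exact absurd h1 hxz
          · rintro rfl
            exact Or.inl ⟨by tauto, hxy⟩
        rw [this]
        exact Set.ncard_singleton _
    rcases le_or_gt ℓ 2 with hle | hlt
    · exact CanBuild.achieve _ s(y,z) (by simp [hyz]) hfree2 (Q_of_InvP hInv2 (by omega))
    · refine CanBuild.step _ s(y,z) (by simp [hyz]) hfree2 ?_
      exact main_ind hn hl2 (ℓ - 3) 2 G2 (by omega) (by omega) hInv2
  case true =>
    have h01 : (0 : Fin (m+3)) ≠ 1 := by simp [Fin.ext_iff]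
    set G1 := addEdge (⊥ : SimpleGraph (Fin (m+3))) s(0,1) with hG1
    have hadj : G1.Adj 0 1 := by
      rw [hG1, addEdge_adj]
      exact Or.inr ⟨Or.inl ⟨rfl, rfl⟩, h01⟩
    have hInv1 : InvP G1 1 := by
      refine ⟨0, 1, Walk.cons hadj Walk.nil, ?_, rfl, ?_, ?_⟩
      · rw [Walk.cons_isPath_iff]
        exact ⟨Walk.IsPath.nil, by simp [h01]⟩
      · intro w hw
        simp only [Walk.support_cons, Walk.support_nil, List.mem_cons,
          List.mem_singleton, not_or] at hw
        obtain ⟨hw0, hw1, -⟩ := hw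
        rw [hG1, neighborSet_addEdge_of_ne _ 0 1 w hw0 hw1]
        ext a
        simp
      · rw [hG1, neighborSet_addEdge_bot_left 0 1 h01]
        exact Set.ncard_singleton _
    rcases eq_or_lt_of_le hl1 with heq | hlt
    · exact CanBuild.achieve _ s(0,1) (by simp [h01]) (by simp)
        (Q_of_InvP hInv1 (Or.inl heq))
    · refine CanBuild.step _ s(0,1) (by simp [h01]) (by simp) ?_
      exact main_ind hn hl2 (ℓ - 2) 1 G1 (by omega) (by omega) hInv1

/-- In the game on `Kₙ` (`n ≥ 3`) in which the players alternately claim free edges with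
no further restriction, either player (moving first or second) can ensure that,
immediately after one of his moves, the claimed graph `G` contains a path `P` such that:
(a) `P` has length `ℓ` or `ℓ + 1`; (b) every vertex off `P` is isolated in `G`; and
(c) at least one endpoint of `P` has degree exactly `1` in `G`, where `1 ≤ ℓ ≤ n - 2`. -/
theorem statement_7 (n ℓ : ℕ) (hn : 3 ≤ n) (hl1 : 1 ≤ ℓ) (hl2 : ℓ ≤ n - 2) :
    ∀ turn : Bool,
      CanBuild
        (fun G : SimpleGraph (Fin n) =>
          ∃ (u v : Fin n) (p : G.Walk u v), p.IsPath ∧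
            (p.length = ℓ ∨ p.length = ℓ + 1) ∧
            (∀ w : Fin n, w ∉ p.support → (G.neighborSet w).ncard = 0) ∧
            ((G.neighborSet u).ncard = 1 ∨ (G.neighborSet v).ncard = 1))
        turn ⊥ := by
  exact statement_7' n ℓ hn hl1 hl2
end

section
/- Let n ≥ 2 and 1 ≤ k ≤ n−1 be integers. The maximum number of edges of a graph on n vertices that is saturated with respect to k-vertex-connectivity (i.e., the graph is not k-vertex-connected, but adding any non-edge produces a k-vertex-connected graph) is exactly C(n−1,2) + k − 1. -/
open SimpleGraph

set_option linter.unusedSectionVars false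
set_option maxHeartbeats 1600000

/-- `G` is saturated with respect to the (monotone increasing) property `P`:
`G` does not satisfy `P`, but adding any non-edge of `G` produces a graph satisfying `P`. -/
def saturatedWrt {V : Type*} (P : SimpleGraph V → Prop) (G : SimpleGraph V) : Prop :=
  ¬ P G ∧ ∀ e : Sym2 V, ¬ e.IsDiag → e ∉ G.edgeSet → P (addEdge G e)

/-- `G` is `k`-vertex-connected: it has more than `k` vertices and removing any set of
fewer than `k` vertices leaves a connected graph. -/
def kConnectedProp {V : Type*} [Fintype V] (k : ℕ) (G : SimpleGraph V) : Prop :=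
  k < Fintype.card V ∧ ∀ S : Set V, S.ncard < k → (G.induce Sᶜ).Connected

section helpers

variable {V : Type*} [Fintype V]

/-- sum of edge counts of disjoint graphs is at most choose 2 -/
lemma aux_sum_le (G H : SimpleGraph V) (hd : ∀ x y, G.Adj x y → H.Adj x y → False) :
    G.edgeSet.ncard + H.edgeSet.ncard ≤ (Fintype.card V).choose 2 := by
  classical
  have hdis : Disjoint G H := by
    rw [disjoint_iff_inf_le]
    intro x y h
    exact (hd x y h.1 h.2).elim
  rw [Set.ncard_eq_toFinset_card' G.edgeSet, Set.ncard_eq_toFinset_card' H.edgeSet]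
  have h1 : G.edgeSet.toFinset = G.edgeFinset := rfl
  have h2 : H.edgeSet.toFinset = H.edgeFinset := rfl
  rw [h1, h2, ← Finset.card_union_of_disjoint (by rwa [SimpleGraph.disjoint_edgeFinset]),
    ← SimpleGraph.edgeFinset_sup]
  exact SimpleGraph.card_edgeFinset_le_card_choose_two

/-- a "star" graph has ncard of edge set equal to ncard of T -/
lemma aux_star (v : V) (T : Set V) (hv : v ∉ T)
    (H : SimpleGraph V) (hH : ∀ x y, H.Adj x y ↔ (x = v ∧ y ∈ T) ∨ (y = v ∧ x ∈ T)) :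
    H.edgeSet.ncard = T.ncard := by
  have hes : H.edgeSet = (fun y => s(v, y)) '' T := by
    ext e
    induction e using Sym2.ind with
    | _ x y =>
      simp only [SimpleGraph.mem_edgeSet, hH, Set.mem_image]
      constructor
      · rintro (⟨rfl, hy⟩ | ⟨rfl, hx⟩)
        · exact ⟨y, hy, rfl⟩
        · exact ⟨x, hx, Sym2.eq_swap⟩
      · rintro ⟨z, hz, he⟩
        rw [Sym2.eq_iff] at he
        rcases he with ⟨rfl, rfl⟩ | ⟨rfl, rfl⟩
        · exact Or.inl ⟨rfl, hz⟩
        · exact Or.inr ⟨rfl, hz⟩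
  rw [hes]
  exact Set.ncard_image_of_injOn (fun a _ b _ h => (Sym2.congr_right).mp h)

/-- bipartite lower bound: if H contains all edges between disjoint nonempty A, B then
A.ncard + B.ncard ≤ H.edgeSet.ncard + 1 -/
lemma aux_bip (A B : Set V) (hd : Disjoint A B) (ha : A.Nonempty) (hb : B.Nonempty)
    (H : SimpleGraph V) (hH : ∀ x y, x ∈ A → y ∈ B → H.Adj x y) :
    A.ncard + B.ncard ≤ H.edgeSet.ncard + 1 := by
  classical
  obtain ⟨a0, ha0⟩ := ha
  obtain ⟨b0, hb0⟩ := hb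
  set f : V → Sym2 V := fun x => if x ∈ A then s(x, b0) else s(a0, x) with hf
  set D : Set V := (A ∪ B) \ {b0} with hD
  have hsub : f '' D ⊆ H.edgeSet := by
    rintro e ⟨x, ⟨hx, hxb0⟩, rfl⟩
    simp only [hf]
    by_cases hxA : x ∈ A
    · simp only [if_pos hxA]
      exact (hH x b0 hxA hb0).symm.symm
    · simp only [if_neg hxA]
      have hxB : x ∈ B := hx.resolve_left hxA
      exact hH a0 x ha0 hxB
  have hinj : Set.InjOn f D := by
    rintro x ⟨hx, hxb0⟩ y ⟨hy, hyb0⟩ hxy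
    simp only [hf] at hxy
    have hAB : ∀ z, z ∈ A → z ∈ B → False := fun z h1 h2 =>
      (hd.le_bot ⟨h1, h2⟩ : z ∈ (∅ : Set V)).elim
    by_cases hxA : x ∈ A <;> by_cases hyA : y ∈ A
    · rw [if_pos hxA, if_pos hyA, Sym2.congr_left] at hxy; exact hxy
    · rw [if_pos hxA, if_neg hyA, Sym2.eq_iff] at hxy
      rcases hxy with ⟨h1, h2⟩ | ⟨h1, h2⟩
      · exact (hyb0 (Set.mem_singleton_iff.mpr h2.symm)).elim
      · exact h1
    · rw [if_neg hxA, if_pos hyA, Sym2.eq_iff] at hxy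
      rcases hxy with ⟨h1, h2⟩ | ⟨h1, h2⟩
      · exact (hxb0 (Set.mem_singleton_iff.mpr h2)).elim
      · exact (hAB a0 ha0 (h1 ▸ hb0)).elim
    · rw [if_neg hxA, if_neg hyA, Sym2.congr_right] at hxy; exact hxy
  have h1 : D.ncard ≤ H.edgeSet.ncard := by
    rw [← Set.ncard_image_of_injOn hinj]
    exact Set.ncard_le_ncard hsub (Set.toFinite _)
  have h2 : D.ncard + 1 = (A ∪ B).ncard := by
    exact Set.ncard_diff_singleton_add_one (Set.mem_union_right A hb0) (Set.toFinite _)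
  have h3 : (A ∪ B).ncard = A.ncard + B.ncard :=
    Set.ncard_union_eq hd (Set.toFinite _) (Set.toFinite _)
  omega

/-- isolated vertex plus another vertex implies not connected -/
lemma aux_iso {W : Type*} (H : SimpleGraph W) (v w : W) (hvw : v ≠ w)
    (hv : ∀ x, ¬ H.Adj v x) : ¬ H.Connected := by
  intro hc
  obtain ⟨p⟩ := hc.preconnected v w
  cases p with
  | nil => exact hvw rfl
  | cons h _ => exact hv _ h

end helpers

/-- the bipartite-complement graph -/
def bipG {V : Type*} (A B : Set V) (hd : Disjoint A B) : SimpleGraph V where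
  Adj x y := (x ∈ A ∧ y ∈ B) ∨ (x ∈ B ∧ y ∈ A)
  symm := by constructor; intro x y h; rcases h with ⟨h1, h2⟩ | ⟨h1, h2⟩ <;> [exact Or.inr ⟨h2, h1⟩; exact Or.inl ⟨h2, h1⟩]
  loopless := by
    constructor
    intro x h
    rcases h with ⟨h1, h2⟩ | ⟨h1, h2⟩
    · exact (hd.le_bot ⟨h1, h2⟩ : x ∈ (∅ : Set V)).elim
    · exact (hd.le_bot ⟨h2, h1⟩ : x ∈ (∅ : Set V)).elim

lemma aux_upper (n k : ℕ) (hn : 2 ≤ n) (hk1 : 1 ≤ k) (hk2 : k ≤ n - 1)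
    (G : SimpleGraph (Fin n)) (S : Set (Fin n)) (hS : S.ncard < k)
    (hc : ¬ (G.induce Sᶜ).Connected) :
    G.edgeSet.ncard ≤ (n - 1).choose 2 + (k - 1) := by
  -- Sᶜ is nonempty
  have hSfin : S.Finite := Set.toFinite _
  have hScard : S.ncard + Sᶜ.ncard = n := by
    rw [Set.ncard_add_ncard_compl]
    simp [Nat.card_eq_fintype_card]
  have hScompl_pos : 1 ≤ Sᶜ.ncard := by omega
  have hne : Sᶜ.Nonempty := by
    rw [← Set.ncard_pos (Set.toFinite _)] at *; omega
  have hnonempty : Nonempty ↥Sᶜ := hne.to_subtype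
  rw [connected_iff] at hc
  push_neg at hc
  have hpre : ¬ (G.induce Sᶜ).Preconnected := fun h => (hc h).false hnonempty.some
  rw [Preconnected] at hpre
  push_neg at hpre
  obtain ⟨a, b, hab⟩ := hpre
  -- the reachable set
  set R : Set (Fin n) := {x | ∃ h : x ∈ Sᶜ, (G.induce Sᶜ).Reachable a ⟨x, h⟩} with hR
  set B : Set (Fin n) := Sᶜ \ R with hB
  have hRsub : R ⊆ Sᶜ := fun x hx => hx.1
  have haR : (a : Fin n) ∈ R := ⟨a.2, by rw [Subtype.coe_eta]⟩
  have hbB : (b : Fin n) ∈ B := by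
    refine ⟨b.2, fun hbR => ?_⟩
    obtain ⟨h, hr⟩ := hbR
    exact hab (by rwa [Subtype.coe_eta] at hr)
  have hdis : Disjoint R B := Set.disjoint_sdiff_right
  -- no G-edges between R and B
  have hnoedge : ∀ x y, x ∈ R → y ∈ B → ¬ G.Adj x y := by
    rintro x y ⟨hx, hrx⟩ ⟨hy, hyR⟩ hadj
    refine hyR ⟨hy, hrx.trans (Adj.reachable ?_)⟩
    exact (SimpleGraph.comap_adj).mpr (by simpa using hadj)
  -- bound via the bipartite graph
  have hbip := aux_bip R B hdis ⟨a, haR⟩ ⟨b, hbB⟩ (bipG R B hdis)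
    (fun x y hx hy => Or.inl ⟨hx, hy⟩)
  have hsum := aux_sum_le G (bipG R B hdis) (by
    rintro x y hGxy (⟨hx, hy⟩ | ⟨hx, hy⟩)
    · exact hnoedge x y hx hy hGxy
    · exact hnoedge y x hy hx hGxy.symm)
  have hRB : R.ncard + B.ncard = Sᶜ.ncard := by
    have := Set.ncard_diff_add_ncard_of_subset hRsub (Set.toFinite Sᶜ)
    rw [hB]; omega
  have hcard : Fintype.card (Fin n) = n := Fintype.card_fin n
  have hchoose : n.choose 2 = (n - 1).choose 2 + (n - 1) := by
    obtain ⟨m, rfl⟩ : ∃ m, n = m + 1 := ⟨n - 1, by omega⟩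
    simp [Nat.choose_succ_succ, Nat.choose_one_right]
    omega
  rw [hcard] at hsum
  omega

def starG {V : Type*} (v : V) (T : Set V) : SimpleGraph V where
  Adj x y := x ≠ y ∧ ((x = v ∧ y ∈ T) ∨ (y = v ∧ x ∈ T))
  symm := by
    constructor
    rintro x y ⟨hne, h⟩
    exact ⟨hne.symm, h.symm⟩
  loopless := ⟨fun x h => h.1 rfl⟩

section construction

variable (n k : ℕ) (hn : 2 ≤ n) (hk1 : 1 ≤ k) (hk2 : k ≤ n - 1)

lemma aux_constr (n k : ℕ) (hn : 2 ≤ n) (hk1 : 1 ≤ k) (hk2 : k ≤ n - 1) :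
    ∃ G : SimpleGraph (Fin n),
      (¬ kConnectedProp k G ∧
        ∀ e : Sym2 (Fin n), ¬ e.IsDiag → e ∉ G.edgeSet → kConnectedProp k (addEdge G e)) ∧
      G.edgeSet.ncard = (n - 1).choose 2 + (k - 1) := by
  classical
  set v : Fin n := ⟨n - 1, by omega⟩ with hv
  set T : Set (Fin n) := {y | k - 1 ≤ y.val ∧ y.val < n - 1} with hT
  have hvT : v ∉ T := by simp [hT, hv]
  set H : SimpleGraph (Fin n) := starG v T with hH
  have hHadj : ∀ x y, H.Adj x y ↔ (x = v ∧ y ∈ T) ∨ (y = v ∧ x ∈ T) := by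
    intro x y
    constructor
    · exact fun h => h.2
    · rintro (⟨rfl, hy⟩ | ⟨rfl, hx⟩)
      · exact ⟨fun h => absurd (h ▸ hy) hvT, Or.inl ⟨rfl, hy⟩⟩
      · exact ⟨fun h => absurd (h ▸ hx) hvT, Or.inr ⟨rfl, hx⟩⟩
  set G : SimpleGraph (Fin n) := ⊤ \ H with hG
  have hGadj : ∀ x y, G.Adj x y ↔ x ≠ y ∧ ¬((x = v ∧ y ∈ T) ∨ (y = v ∧ x ∈ T)) := by
    intro x y
    rw [hG, sdiff_adj, top_adj, hHadj]
  -- cardinality of T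
  have hTcard : T.ncard = n - k := by
    have : T = ↑(Finset.Ico (⟨k - 1, by omega⟩ : Fin n) (⟨n - 1, by omega⟩ : Fin n)) := by
      ext y
      simp [hT, Fin.le_def, Fin.lt_def]
    rw [this, Set.ncard_coe_finset, Fin.card_Ico]
    simp
    omega
  -- edge count of G
  have hHcard : H.edgeSet.ncard = n - k := by rw [aux_star v T hvT H hHadj, hTcard]
  have hGcard : G.edgeSet.ncard = (n - 1).choose 2 + (k - 1) := by
    have h1 : G.edgeSet = (⊤ : SimpleGraph (Fin n)).edgeSet \ H.edgeSet := by
      rw [hG, SimpleGraph.edgeSet_sdiff]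
    have hsub : H.edgeSet ⊆ (⊤ : SimpleGraph (Fin n)).edgeSet :=
      SimpleGraph.edgeSet_mono le_top
    have h2 : G.edgeSet.ncard = (⊤ : SimpleGraph (Fin n)).edgeSet.ncard
        - H.edgeSet.ncard := by rw [h1, Set.ncard_diff hsub (Set.toFinite _)]
    have h3 : (⊤ : SimpleGraph (Fin n)).edgeSet.ncard = n.choose 2 := by
      rw [Set.ncard_eq_toFinset_card' ((⊤ : SimpleGraph (Fin n)).edgeSet)]
      have : ((⊤ : SimpleGraph (Fin n)).edgeSet).toFinset
          = (⊤ : SimpleGraph (Fin n)).edgeFinset := rfl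
      rw [this, card_edgeFinset_top_eq_card_choose_two, Fintype.card_fin]
    have hchoose : n.choose 2 = (n - 1).choose 2 + (n - 1) := by
      obtain ⟨m, rfl⟩ : ∃ m, n = m + 1 := ⟨n - 1, by omega⟩
      simp [Nat.choose_succ_succ, Nat.choose_one_right]
      omega
    have hle : n - k ≤ n.choose 2 := by omega
    omega
  refine ⟨G, ⟨⟨?_, ?_⟩, hGcard⟩⟩
  · -- not k-connected
    rintro ⟨-, hall⟩
    set S : Set (Fin n) := {y | y.val < k - 1} with hS
    have hScard : S.ncard = k - 1 := by
      have : S = ↑(Finset.Iio (⟨k - 1, by omega⟩ : Fin n)) := by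
        ext y; simp [hS, Fin.lt_def]
      rw [this, Set.ncard_coe_finset, Fin.card_Iio]
    have hcon := hall S (by omega)
    have hvS : v ∈ Sᶜ := by simp [hS, hv]; omega
    have hwS : (⟨k - 1, by omega⟩ : Fin n) ∈ Sᶜ := by simp [hS]
    refine aux_iso _ (⟨v, hvS⟩ : ↥Sᶜ) ⟨⟨k - 1, by omega⟩, hwS⟩ ?_ ?_ hcon
    · intro hcontra
      have h' : v = (⟨k - 1, by omega⟩ : Fin n) := Subtype.mk_eq_mk.mp hcontra
      have := congrArg Fin.val h'
      simp [hv] at this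
      omega
    · rintro ⟨x, hx⟩ hadj
      have hadj' : G.Adj v x := by simpa using hadj
      rw [hGadj] at hadj'
      obtain ⟨hne, hnot⟩ := hadj'
      have hxT : x ∉ T := fun hxT => hnot (Or.inl ⟨rfl, hxT⟩)
      have hxS : ¬ (x.val < k - 1) := hx
      have : x.val = n - 1 := by
        simp [hT] at hxT
        have := x.isLt
        omega
      exact hne (Fin.ext (by simp [hv, this])).symm
  · -- saturation
    intro e he hee
    -- first, reduce to e = s(v, y0) with y0 ∈ T
    have key : ∀ y0 : Fin n, y0 ∈ T → kConnectedProp k (addEdge G s(v, y0)) := by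
      intro y0 hy0
      have hy0v : y0 ≠ v := fun h => absurd (h ▸ hy0) hvT
      set G' : SimpleGraph (Fin n) := addEdge G s(v, y0) with hG'
      have f1 : ∀ x y : Fin n, x ≠ y → x ≠ v → y ≠ v → G'.Adj x y := by
        intro x y hxy hxv hyv
        refine Or.inl ((hGadj x y).mpr ⟨hxy, ?_⟩)
        rintro (⟨rfl, -⟩ | ⟨rfl, -⟩) <;> simp_all
      have f2 : ∀ z : Fin n, z.val < k - 1 → G'.Adj v z := by
        intro z hz
        refine Or.inl ((hGadj v z).mpr ⟨?_, ?_⟩)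
        · intro hcontra
          have := congrArg Fin.val hcontra
          simp [hv] at this
          omega
        · rintro (⟨-, hzT⟩ | ⟨hzv, -⟩)
          · exact absurd hzT (by simp [hT]; omega)
          · have := congrArg Fin.val hzv
            simp [hv] at this
            omega
      have f3 : G'.Adj v y0 := by
        refine Or.inr ?_
        rw [fromEdgeSet_adj]
        exact ⟨rfl, hy0v.symm⟩
      constructor
      · rw [Fintype.card_fin]; omega
      intro S hS
      -- find u ∉ S, u ≠ v
      have hu_ex : ∃ u : Fin n, u ∉ S ∧ u ≠ v := by
        by_contra hcontra
        push_neg at hcontra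
        have hsub : (Set.univ : Set (Fin n)) ⊆ S ∪ {v} := by
          intro x _
          by_cases hxS : x ∈ S
          · exact Or.inl hxS
          · exact Or.inr (hcontra x hxS)
        have h1 : (Set.univ : Set (Fin n)).ncard = n := by
          rw [Set.ncard_univ, Nat.card_eq_fintype_card, Fintype.card_fin]
        have h2 : (S ∪ {v}).ncard ≤ S.ncard + 1 := by
          have := Set.ncard_union_le S {v}
          simpa using this
        have h3 := Set.ncard_le_ncard hsub (Set.toFinite _)
        omega
      obtain ⟨u, huS, huv⟩ := hu_ex
      -- find z neighbor of v avoiding S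
      set N : Set (Fin n) := insert y0 {z | z.val < k - 1} with hN
      have hNcard : N.ncard = k := by
        have h1 : y0 ∉ {z : Fin n | z.val < k - 1} := by
          have := hy0.1
          simp [hT] at hy0 ⊢
          omega
        rw [hN, Set.ncard_insert_of_notMem h1 (Set.toFinite _)]
        have : {z : Fin n | z.val < k - 1} = ↑(Finset.Iio (⟨k - 1, by omega⟩ : Fin n)) := by
          ext z; simp [Fin.lt_def]
        rw [this, Set.ncard_coe_finset, Fin.card_Iio]
        show k - 1 + 1 = k
        omega
      have hz_ex : ∃ z, z ∈ N ∧ z ∉ S := by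
        by_contra hcontra
        push_neg at hcontra
        have := Set.ncard_le_ncard hcontra (Set.toFinite _)
        omega
      obtain ⟨z, hzN, hzS⟩ := hz_ex
      have hzv : z ≠ v := by
        rcases hzN with rfl | hzlt
        · exact hy0v
        · intro hcontra
          have := congrArg Fin.val hcontra
          simp only [hv] at this
          simp at hzlt
          omega
      have hadj_vz : G'.Adj v z := by
        rcases hzN with rfl | hzlt
        · exact f3
        · exact f2 z hzlt
      -- connectivity
      rw [connected_iff_exists_forall_reachable]
      have huSc : u ∈ Sᶜ := huS
      refine ⟨⟨u, huSc⟩, ?_⟩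
      have hreach_z : ∀ hz' : z ∈ Sᶜ, (G'.induce Sᶜ).Reachable ⟨u, huSc⟩ ⟨z, hz'⟩ := by
        intro hz'
        by_cases huz : u = z
        · subst huz; rfl
        · exact Adj.reachable (by simpa using f1 u z huz huv hzv)
      rintro ⟨w, hw⟩
      by_cases hwv : w = v
      · subst hwv
        refine (hreach_z hzS).trans (Adj.reachable ?_)
        simpa using hadj_vz.symm
      · by_cases hwu : w = u
        · subst hwu; rfl
        · exact Adj.reachable (by simpa using f1 u w (fun h => hwu h.symm) huv hwv)
    -- now use key
    induction e using Sym2.ind with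
    | _ x y =>
      have hxy : x ≠ y := by simpa using he
      have hnadj : ¬ G.Adj x y := hee
      rw [hGadj] at hnadj
      push_neg at hnadj
      rcases hnadj hxy with ⟨rfl, hyT⟩ | ⟨rfl, hxT⟩
      · exact key y hyT
      · rw [Sym2.eq_swap]
        exact key x hxT

/-- For `2 ≤ n` and `1 ≤ k ≤ n - 1`, the maximum number of edges of a graph on `n`
vertices saturated with respect to `k`-vertex-connectivity is exactly `C(n-1,2) + k - 1`. -/
theorem statement_8 (n k : ℕ) (hn : 2 ≤ n) (hk1 : 1 ≤ k) (hk2 : k ≤ n - 1) :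
    IsGreatest
      {m : ℕ | ∃ G : SimpleGraph (Fin n),
        saturatedWrt (kConnectedProp k) G ∧ G.edgeSet.ncard = m}
      ((n - 1).choose 2 + (k - 1)) := by
  constructor
  · obtain ⟨G, hsat, hcard⟩ := aux_constr n k hn hk1 hk2
    exact ⟨G, ⟨hsat.1, hsat.2⟩, hcard⟩
  · rintro m ⟨G, ⟨hnot, -⟩, rfl⟩
    have hkn : k < Fintype.card (Fin n) := by rw [Fintype.card_fin]; omega
    have hex : ∃ S : Set (Fin n), S.ncard < k ∧ ¬ (G.induce Sᶜ).Connected := by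
      by_contra hc
      push_neg at hc
      exact hnot ⟨hkn, hc⟩
    obtain ⟨S, hS, hSc⟩ := hex
    exact aux_upper n k hn hk1 hk2 G S hS hSc
end construction
end

section
/- Let G be a 3-colorable graph with a fixed vertex v0 and associated partition V(G) = T_G ∪ M_G ∪ B_G, and let x ≠ v0 be a vertex of G. Then: (a) if Γ_G(x) is not 2-colorable, then x ∈ T_G; and (b) if B_G is an independent set in G (property (P1)) and Γ_G(x) is 2-colorable, then x ∉ T_G. -/
open SimpleGraph

/-- Top vertices: the vertices receiving the same color as `v0` in every proper
3-coloring of `G`. -/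
def topSet {V : Type*} (G : SimpleGraph V) (v0 : V) : Set V :=
  {x | ∀ c : G.Coloring (Fin 3), c x = c v0}

/-- Middle vertices: the vertices outside the top having a neighbor in the top. -/
def midSet {V : Type*} (G : SimpleGraph V) (v0 : V) : Set V :=
  {x | x ∉ topSet G v0 ∧ ∃ t ∈ topSet G v0, G.Adj x t}

/-- Bottom vertices: all remaining vertices. -/
def botSet' {V : Type*} (G : SimpleGraph V) (v0 : V) : Set V :=
  {x | x ∉ topSet G v0 ∧ x ∉ midSet G v0}

/-- The vertex set of `Γ_G(u)`, the connected component of `u` in the subgraph of `G`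
induced on `{u} ∪ M_G`: all vertices reachable from `u` by a walk staying inside
`{u} ∪ M_G`. -/
def gammaSet {V : Type*} (G : SimpleGraph V) (v0 u : V) : Set V :=
  {w | ∃ p : G.Walk u w, ∀ z ∈ p.support, z ∈ insert u (midSet G v0)}

/-- `m` and `m'` lie in the same middle-component of `G` (a connected component of the
subgraph induced on `M_G`): they are joined by a walk staying inside `M_G`. -/
def midReach {V : Type*} (G : SimpleGraph V) (v0 : V) (m m' : V) : Prop :=
  ∃ p : G.Walk m m', ∀ z ∈ p.support, z ∈ midSet G v0

/-- Property (P1): the bottom `B_G` is an independent set in `G`. -/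
def prop1 {V : Type*} (G : SimpleGraph V) (v0 : V) : Prop :=
  ∀ u ∈ botSet' G v0, ∀ v ∈ botSet' G v0, ¬ G.Adj u v

/-- Property (P2): every middle-component of `G` has at most one attached bottom
vertex. -/
def prop2 {V : Type*} (G : SimpleGraph V) (v0 : V) : Prop :=
  ∀ u v m m' : V, u ∈ botSet' G v0 → v ∈ botSet' G v0 →
    m ∈ midSet G v0 → m' ∈ midSet G v0 →
    G.Adj u m → G.Adj v m' → midReach G v0 m m' → u = v

/-- `G` is good: it satisfies properties (P1) and (P2). -/
def goodGraph {V : Type*} (G : SimpleGraph V) (v0 : V) : Prop :=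
  prop1 G v0 ∧ prop2 G v0

/-- The bad pairs `BAD_G`: the pairs `uv` such that there exist distinct bottom vertices
`x ≠ y` with `u ∈ V(Γ_G(x))` and `v ∈ V(Γ_G(y))`. -/
def badPair {V : Type*} (G : SimpleGraph V) (v0 : V) (e : Sym2 V) : Prop :=
  ∃ u v x y : V, e = s(u, v) ∧ x ∈ botSet' G v0 ∧ y ∈ botSet' G v0 ∧ x ≠ y ∧
    u ∈ gammaSet G v0 x ∧ v ∈ gammaSet G v0 y

/-- `G` is almost good: `G` is good, or some edge can be removed from `G` so that the
resulting graph is good. -/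
def almostGood {V : Type*} (G : SimpleGraph V) (v0 : V) : Prop :=
  goodGraph G v0 ∨ ∃ e ∈ G.edgeSet, goodGraph (G.deleteEdges {e}) v0

/-- Claim: for a 3-colorable graph `G` with fixed vertex `v0` and a vertex `x ≠ v0`:
(a) if `Γ_G(x)` is not 2-colorable then `x` is a top vertex, and (b) if `B_G` is
independent (property (P1)) and `Γ_G(x)` is 2-colorable then `x` is not a top vertex. -/
theorem statement_13 {V : Type*} (G : SimpleGraph V) (hcol : G.Colorable 3)
    (v0 x : V) (hx : x ≠ v0) :
    (¬ (G.induce (gammaSet G v0 x)).Colorable 2 → x ∈ topSet G v0) ∧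
    (prop1 G v0 → (G.induce (gammaSet G v0 x)).Colorable 2 → x ∉ topSet G v0) := by
  classical
  have hxΓ : x ∈ gammaSet G v0 x := ⟨SimpleGraph.Walk.nil, by simp⟩
  have hmem : ∀ w ∈ gammaSet G v0 x, w ∈ insert x (midSet G v0) := by
    rintro w ⟨p, hp⟩
    exact hp w p.end_mem_support
  have hext : ∀ u ∈ gammaSet G v0 x, ∀ v, G.Adj u v →
      v ∈ insert x (midSet G v0) → v ∈ gammaSet G v0 x := by
    rintro u ⟨p, hp⟩ v huv hv
    refine ⟨p.concat huv, fun z hz => ?_⟩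
    rw [SimpleGraph.Walk.support_concat, List.mem_append] at hz
    rcases hz with hz | hz
    · exact hp z hz
    · simp only [List.mem_singleton] at hz
      subst hz; exact hv
  have hmid : ∀ c : G.Coloring (Fin 3), ∀ m ∈ midSet G v0, c m ≠ c v0 := by
    rintro c m ⟨-, t, ht, hadj⟩
    have h := c.valid hadj
    rw [ht c] at h
    exact h
  have hv0T : v0 ∈ topSet G v0 := fun c => rfl
  constructor
  · -- part (a)
    intro h2
    by_contra hxT
    apply h2
    have hex : ∃ c : G.Coloring (Fin 3), c x ≠ c v0 := by
      by_contra h; push_neg at h; exact hxT h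
    obtain ⟨c, hcx⟩ := hex
    have key : ∀ a b b' : Fin 3, b ≠ a → b' ≠ a → b ≠ b' →
        (if b = a + 1 then (0 : Fin 2) else 1) ≠ (if b' = a + 1 then 0 else 1) := by
      decide
    refine ⟨SimpleGraph.Coloring.mk
      (fun u => if c u.1 = c v0 + 1 then 0 else 1) ?_⟩
    rintro ⟨u, hu⟩ ⟨v, hv⟩ huv
    have hadj : G.Adj u v := huv
    have hna : ∀ w ∈ gammaSet G v0 x, c w ≠ c v0 := by
      intro w hw
      rcases Set.mem_insert_iff.mp (hmem w hw) with rfl | hw'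
      · exact hcx
      · exact hmid c w hw'
    exact key (c v0) (c u) (c v) (hna u hu) (hna v hv) (c.valid hadj)
  · -- part (b)
    intro hP1 h2 hxT
    obtain ⟨c⟩ := hcol
    obtain ⟨d⟩ := h2
    set a := c v0 with ha
    have h3 : ∀ b : Fin 3, b + 1 ≠ b ∧ b + 2 ≠ b ∧ b + 1 ≠ b + 2 := by decide
    set σ : Fin 2 → Fin 3 := fun i => if i = 0 then a + 1 else a + 2 with hσ
    have keya : ∀ (b : Fin 3) (i : Fin 2), (if i = 0 then b + 1 else b + 2) ≠ b := by
      decide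
    have keyinj : ∀ (b : Fin 3) (i j : Fin 2), i ≠ j →
        (if i = 0 then b + 1 else b + 2) ≠ (if j = 0 then b + 1 else b + 2) := by
      decide
    have hσa : ∀ i, σ i ≠ a := fun i => keya a i
    have hσinj : ∀ i j, i ≠ j → σ i ≠ σ j := fun i j hij => keyinj a i j hij
    set c' : V → Fin 3 := fun w =>
      if h : w ∈ gammaSet G v0 x then σ (d ⟨w, h⟩)
      else if w ∈ botSet' G v0 then a else c w with hc'
    have hc'Γ : ∀ w, ∀ h : w ∈ gammaSet G v0 x, c' w = σ (d ⟨w, h⟩) := by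
      intro w h; simp [hc', h]
    -- a vertex adjacent to Γ(x) but not in Γ(x) gets color a
    have hout : ∀ u v, G.Adj u v → u ∈ gammaSet G v0 x → v ∉ gammaSet G v0 x →
        c' v = a := by
      intro u v huv hu hv
      have hvM : v ∉ insert x (midSet G v0) := fun h => hv (hext u hu v huv h)
      by_cases hvB : v ∈ botSet' G v0
      · simp [hc', hv, hvB]
      · have hvT : v ∈ topSet G v0 := by
          by_contra hvT
          rcases not_and_or.mp (fun h : v ∉ topSet G v0 ∧ v ∉ midSet G v0 => hvB h)
            with h | h
          · exact h hvT
          · exact hvM (Set.mem_insert_iff.mpr (Or.inr (not_not.mp h)))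
        have : c v = a := hvT c
        simp [hc', hv, hvB, this]
    have valid : ∀ ⦃u v : V⦄, G.Adj u v → c' u ≠ c' v := by
      intro u v huv
      by_cases hu : u ∈ gammaSet G v0 x <;> by_cases hv : v ∈ gammaSet G v0 x
      · rw [hc'Γ u hu, hc'Γ v hv]
        have hadj : (G.induce (gammaSet G v0 x)).Adj ⟨u, hu⟩ ⟨v, hv⟩ := huv
        exact hσinj _ _ (d.valid hadj)
      · rw [hc'Γ u hu, hout u v huv hu hv]
        exact hσa _
      · rw [hc'Γ v hv, hout v u huv.symm hv hu]
        exact (hσa _).symm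
      · -- both outside Γ(x)
        by_cases huB : u ∈ botSet' G v0 <;> by_cases hvB : v ∈ botSet' G v0
        · exact absurd huv (hP1 u huB v hvB)
        · -- u bottom, v not bottom: v must be middle
          have hvT : v ∉ topSet G v0 := by
            intro hvT
            exact huB.2 ⟨huB.1, v, hvT, huv⟩
          have hvM : v ∈ midSet G v0 := by
            rcases not_and_or.mp (fun h : v ∉ topSet G v0 ∧ v ∉ midSet G v0 => hvB h)
              with h | h
            · exact absurd hvT h
            · exact not_not.mp h
          have : c v ≠ a := hmid c v hvM
          simp only [hc', dif_neg hu, dif_neg hv, if_pos huB, if_neg hvB]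
          exact fun h => this h.symm
        · have huT : u ∉ topSet G v0 := by
            intro huT
            exact hvB.2 ⟨hvB.1, u, huT, huv.symm⟩
          have huM : u ∈ midSet G v0 := by
            rcases not_and_or.mp (fun h : u ∉ topSet G v0 ∧ u ∉ midSet G v0 => huB h)
              with h | h
            · exact absurd huT h
            · exact not_not.mp h
          have : c u ≠ a := hmid c u huM
          simp only [hc', dif_neg hu, dif_neg hv, if_neg huB, if_pos hvB]
          exact this
        · simp only [hc', dif_neg hu, dif_neg hv, if_neg huB, if_neg hvB]
          exact c.valid huv
    have hv0Γ : v0 ∉ gammaSet G v0 x := by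
      intro h
      rcases Set.mem_insert_iff.mp (hmem v0 h) with h' | h'
      · exact hx h'.symm
      · exact h'.1 hv0T
    have hv0B : v0 ∉ botSet' G v0 := fun h => h.1 hv0T
    have hcontr : c' x = c' v0 :=
      hxT (SimpleGraph.Coloring.mk c' (fun {u v} h => valid h))
    have hx' : c' x = σ (d ⟨x, hxΓ⟩) := hc'Γ x hxΓ
    have hv0' : c' v0 = a := by simp [hc', hv0Γ, hv0B, ha]
    rw [hx', hv0'] at hcontr
    exact hσa _ hcontr
end

section
/- Let k ≥ 2 be an integer and let G0 = (V,E) be a graph. Assume there is a partition V = U ∪ W such that ν(G0) = ν(G0[U]) = k−1, and that there exist vertices w1, w2 ∈ W and u ∈ U such that w1 and w2 each have degree exactly 1 in G0 and both edges u w1 and u w2 belong to E. Then, in the saturation game (G0, M_k), where M_k is the property of admitting a matching of size k, Max as the second player has a strategy ensuring that in the graph G at the end of the game every vertex w ∈ W has at least one neighbor in U. -/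
open SimpleGraph

/-- In the saturation game for the monotone property `P`, a move `e` is legal in
position `G` if `e` is a non-loop non-edge of `G` whose addition keeps `P` unsatisfied. -/
def legalMove {V : Type*} (P : SimpleGraph V → Prop) (G : SimpleGraph V) (e : Sym2 V) : Prop :=
  ¬ e.IsDiag ∧ e ∉ G.edgeSet ∧ ¬ P (addEdge G e)

/-- `GameEnsures P Q turn G` : in the saturation game for the property `P`, played from
position `G` where the protagonist is to move iff `turn = true`, the protagonist has a
strategy guaranteeing that the final (`P`-saturated) graph satisfies `Q`. -/
inductive GameEnsures {V : Type*} (P Q : SimpleGraph V → Prop) : Bool → SimpleGraph V → Prop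
  | gameOver (turn : Bool) (G : SimpleGraph V)
      (hend : ∀ e, ¬ legalMove P G e) (hQ : Q G) : GameEnsures P Q turn G
  | protagonistMove (G : SimpleGraph V) (e : Sym2 V) (hl : legalMove P G e)
      (h : GameEnsures P Q false (addEdge G e)) : GameEnsures P Q true G
  | opponentMove (G : SimpleGraph V) (e₀ : Sym2 V) (hl : legalMove P G e₀)
      (h : ∀ e, legalMove P G e → GameEnsures P Q true (addEdge G e)) :
      GameEnsures P Q false G

/-- The property of admitting a matching of size `k`. -/
def hasMatchingOfSize {V : Type*} (k : ℕ) (G : SimpleGraph V) : Prop :=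
  ∃ M : G.Subgraph, M.IsMatching ∧ M.edgeSet.ncard = k

/-- The matching number `ν(G)`: the maximum size of a matching in `G`. -/
noncomputable def matchingNumber {V : Type*} (G : SimpleGraph V) : ℕ :=
  sSup {m : ℕ | ∃ M : G.Subgraph, M.IsMatching ∧ M.edgeSet.ncard = m}

section AuxEM

variable {V : Type*}

/-- The support (set of covered vertices) of a set of edges. -/
def ESupp (s : Set (Sym2 V)) : Set V := {v | ∃ e ∈ s, v ∈ e}

/-- `s` is (the edge set of) a matching in `G`. -/
structure IsEM (G : SimpleGraph V) (s : Set (Sym2 V)) : Prop where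
  sub : s ⊆ G.edgeSet
  disj : ∀ e ∈ s, ∀ f ∈ s, e ≠ f → ∀ v, v ∈ e → v ∉ f

lemma IsEM.mono {G G' : SimpleGraph V} {s : Set (Sym2 V)} (hle : G ≤ G') (h : IsEM G s) :
    IsEM G' s :=
  ⟨fun _ he => SimpleGraph.edgeSet_mono hle (h.sub he), h.disj⟩

lemma IsEM.subset {G : SimpleGraph V} {s t : Set (Sym2 V)} (hts : t ⊆ s) (h : IsEM G s) :
    IsEM G t :=
  ⟨fun _ he => h.sub (hts he), fun e he f hf => h.disj e (hts he) f (hts hf)⟩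

/-- An edge-matching gives a matching subgraph with the same edge set. -/
lemma hasMatchingOfSize_iff_em (G : SimpleGraph V) (k : ℕ) :
    hasMatchingOfSize k G ↔ ∃ s, IsEM G s ∧ s.ncard = k := by
  constructor
  · rintro ⟨M, hM, hcard⟩
    refine ⟨M.edgeSet, ⟨M.edgeSet_subset, ?_⟩, hcard⟩
    intro e he f hf hne v hv hvf
    obtain ⟨a, rfl⟩ := Sym2.mem_iff_exists.mp hv
    obtain ⟨b, rfl⟩ := Sym2.mem_iff_exists.mp hvf
    have ha : M.Adj v a := SimpleGraph.Subgraph.mem_edgeSet.mp he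
    have hb : M.Adj v b := SimpleGraph.Subgraph.mem_edgeSet.mp hf
    obtain ⟨c, -, huniq⟩ := hM (M.edge_vert ha)
    exact hne (by rw [huniq a ha, huniq b hb])
  · rintro ⟨s, hs, hcard⟩
    refine ⟨⟨ESupp s, fun a b => s(a, b) ∈ s, fun h => (SimpleGraph.mem_edgeSet G).mp (hs.sub h),
        fun h => ⟨_, h, Sym2.mem_mk_left _ _⟩, ⟨fun a b h => by show s(b,a) ∈ s; rwa [Sym2.eq_swap]⟩⟩, ?_, ?_⟩
    · rintro v ⟨e, he, hve⟩
      obtain ⟨a, rfl⟩ := Sym2.mem_iff_exists.mp hve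
      refine ⟨a, he, ?_⟩
      intro b hb
      by_cases hef : s(v, b) = s(v, a)
      · exact (Sym2.congr_right.mp hef)
      · exact absurd (Sym2.mem_mk_left v b)
          (hs.disj _ he _ hb (fun h => hef h.symm) v (Sym2.mem_mk_left v a))
    · have : (⟨ESupp s, fun a b => s(a, b) ∈ s, fun h => (SimpleGraph.mem_edgeSet G).mp (hs.sub h),
        fun h => ⟨_, h, Sym2.mem_mk_left _ _⟩, ⟨fun a b h => by show s(b,a) ∈ s; rwa [Sym2.eq_swap]⟩⟩ :
          G.Subgraph).edgeSet = s := by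
        ext e
        induction e using Sym2.ind with
        | _ a b => exact SimpleGraph.Subgraph.mem_edgeSet
      rw [this, hcard]

end AuxEM

section AuxMore

variable {V : Type*}

lemma edge_pair {G : SimpleGraph V} {s : Set (Sym2 V)} (hs : IsEM G s) {e : Sym2 V}
    (he : e ∈ s) {y : V} (hy : y ∈ e) : ∃ z, e = s(y, z) ∧ y ≠ z := by
  obtain ⟨z, rfl⟩ := Sym2.mem_iff_exists.mp hy
  exact ⟨z, rfl, fun h => (G.not_isDiag_of_mem_edgeSet (hs.sub he)) (Sym2.mk_isDiag_iff.mpr h)⟩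

lemma esupp_ncard [Finite V] {G : SimpleGraph V} {s : Set (Sym2 V)} (hs : IsEM G s) :
    (ESupp s).ncard = 2 * s.ncard := by
  have key : ∀ t : Set (Sym2 V), t.Finite → IsEM G t → (ESupp t).ncard = 2 * t.ncard := by
    intro t ht
    refine Set.Finite.induction_on t ht ?_ ?_
    · intro _
      have : ESupp (∅ : Set (Sym2 V)) = ∅ := by
        ext v; simp [ESupp]
      simp [this]
    · intro e t het htfin ih h
      have hht : IsEM G t := h.subset (Set.subset_insert _ _)
      obtain ⟨a, b, rfl⟩ : ∃ a b, e = s(a, b) := by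
        induction e using Sym2.ind with
        | _ a b => exact ⟨a, b, rfl⟩
      have hab : a ≠ b := fun hEq => (G.not_isDiag_of_mem_edgeSet
        (h.sub (Set.mem_insert _ _))) (Sym2.mk_isDiag_iff.mpr hEq)
      have hsupp : ESupp (insert s(a, b) t) = {a, b} ∪ ESupp t := by
        ext v
        constructor
        · rintro ⟨f, hf, hvf⟩
          rcases hf with rfl | hf
          · exact Or.inl (by simpa [Sym2.mem_iff] using hvf)
          · exact Or.inr ⟨f, hf, hvf⟩
        · rintro (hv | ⟨f, hf, hvf⟩)
          · exact ⟨s(a, b), Set.mem_insert _ _, by rcases hv with rfl | rfl <;> simp⟩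
          · exact ⟨f, Set.mem_insert_of_mem _ hf, hvf⟩
      have hdisj : Disjoint ({a, b} : Set V) (ESupp t) := by
        rw [Set.disjoint_left]
        rintro v hv ⟨f, hf, hvf⟩
        have hne : s(a, b) ≠ f := fun hEq => het (hEq ▸ hf)
        refine h.disj s(a, b) (Set.mem_insert _ _) f (Set.mem_insert_of_mem _ hf) hne v ?_ hvf
        rcases hv with rfl | rfl <;> simp
      rw [hsupp, Set.ncard_union_eq hdisj (Set.toFinite _) (Set.toFinite _),
        Set.ncard_pair hab, ih hht, Set.ncard_insert_of_notMem het htfin]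
      ring
  exact key s (Set.toFinite _) hs

lemma matchingNumber_bddAbove [Finite V] (G : SimpleGraph V) :
    BddAbove {m : ℕ | ∃ M : G.Subgraph, M.IsMatching ∧ M.edgeSet.ncard = m} := by
  refine ⟨(Set.univ : Set (Sym2 V)).ncard, ?_⟩
  rintro x ⟨M, -, rfl⟩
  exact Set.ncard_le_ncard (Set.subset_univ _) (Set.toFinite _)

lemma exists_em_matchingNumber [Finite V] (G : SimpleGraph V) :
    ∃ s, IsEM G s ∧ s.ncard = matchingNumber G := by
  have hne : {m : ℕ | ∃ M : G.Subgraph, M.IsMatching ∧ M.edgeSet.ncard = m}.Nonempty := by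
    refine ⟨0, ⊥, ?_, by simp⟩
    intro v hv
    simp [SimpleGraph.Subgraph.verts_bot] at hv
  have := Nat.sSup_mem hne (matchingNumber_bddAbove G)
  exact (hasMatchingOfSize_iff_em G _).mp this

lemma not_hasMatchingOfSize_of_lt [Finite V] {G : SimpleGraph V} {k : ℕ}
    (h : matchingNumber G < k) : ¬ hasMatchingOfSize k G := by
  rintro ⟨M, hM, hc⟩
  have : k ≤ matchingNumber G := le_csSup (matchingNumber_bddAbove G) ⟨M, hM, hc⟩
  omega

lemma induce_em {G : SimpleGraph V} {U : Set V} {s : Set (Sym2 ↥U)}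
    (hs : IsEM (G.induce U) s) :
    IsEM G (Sym2.map Subtype.val '' s) ∧ (Sym2.map Subtype.val '' s).ncard = s.ncard ∧
      ESupp (Sym2.map Subtype.val '' s) ⊆ U := by
  refine ⟨⟨?_, ?_⟩, Set.ncard_image_of_injective s (Sym2.map.injective Subtype.val_injective), ?_⟩
  · rintro e ⟨f, hf, rfl⟩
    obtain ⟨a, b, rfl⟩ : ∃ a b, f = s(a, b) := by
      induction f using Sym2.ind with
      | _ a b => exact ⟨a, b, rfl⟩
    have : (G.induce U).Adj a b := (SimpleGraph.mem_edgeSet _).mp (hs.sub hf)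
    rw [Sym2.map_pair_eq]
    exact (SimpleGraph.mem_edgeSet _).mpr this
  · rintro e ⟨e', he', rfl⟩ f ⟨f', hf', rfl⟩ hne v hv hvf
    obtain ⟨a, ha, rfl⟩ := Sym2.mem_map.mp hv
    obtain ⟨b, hb, hba⟩ := Sym2.mem_map.mp hvf
    have hab : b = a := Subtype.val_injective hba
    subst hab
    exact hs.disj e' he' f' hf' (fun h => hne (by rw [h])) b ha hb
  · rintro v ⟨e, ⟨f, hf, rfl⟩, hv⟩
    obtain ⟨a, -, rfl⟩ := Sym2.mem_map.mp hv
    exact a.2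

lemma addEdge_edgeSet {G : SimpleGraph V} {e : Sym2 V} (he : ¬ e.IsDiag) :
    (addEdge G e).edgeSet = insert e G.edgeSet := by
  rw [addEdge, SimpleGraph.edgeSet_sup, SimpleGraph.edgeSet_fromEdgeSet]
  ext f
  simp only [Set.mem_union, Set.mem_diff, Set.mem_singleton_iff, Set.mem_setOf_eq,
    Set.mem_insert_iff]
  constructor
  · rintro (h | ⟨rfl, -⟩)
    · exact Or.inr h
    · exact Or.inl rfl
  · rintro (rfl | h)
    · exact Or.inr ⟨rfl, he⟩
    · exact Or.inl h

lemma game_of_invariant [Fintype V] (P Q : SimpleGraph V → Prop)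
    (I : SimpleGraph V → Prop)
    (hpres : ∀ G e, I G → legalMove P G e → I (addEdge G e))
    (hend : ∀ G, I G → (∀ e, ¬ legalMove P G e) → Q G) :
    ∀ (n : ℕ) (G : SimpleGraph V), (G.edgeSetᶜ).ncard ≤ n → I G →
      ∀ b, GameEnsures P Q b G := by
  intro n
  induction n with
  | zero =>
    intro G hn hI b
    have hnox : ∀ e, ¬ legalMove P G e := by
      intro e he
      have hmem : e ∈ G.edgeSetᶜ := he.2.1
      have hpos : 0 < (G.edgeSetᶜ).ncard := (Set.ncard_pos (Set.toFinite _)).mpr ⟨e, hmem⟩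
      omega
    exact .gameOver b G hnox (hend G hI hnox)
  | succ n ih =>
    intro G hn hI b
    by_cases hex : ∃ e, legalMove P G e
    · obtain ⟨e₀, he₀⟩ := hex
      have key : ∀ e, legalMove P G e → ((addEdge G e).edgeSetᶜ).ncard ≤ n := by
        intro e he
        have hc : (addEdge G e).edgeSetᶜ = G.edgeSetᶜ \ {e} := by
          rw [addEdge_edgeSet he.1]
          ext x
          simp only [Set.mem_compl_iff, Set.mem_insert_iff, Set.mem_diff,
            Set.mem_singleton_iff, not_or]
          tauto
        have hmem : e ∈ G.edgeSetᶜ := he.2.1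
        rw [hc, Set.ncard_diff_singleton_of_mem hmem]
        omega
      cases b with
      | false =>
        exact .opponentMove G e₀ he₀
          (fun e he => ih (addEdge G e) (key e he) (hpres G e hI he) true)
      | true =>
        exact .protagonistMove G e₀ he₀ (ih (addEdge G e₀) (key e₀ he₀) (hpres G e₀ hI he₀) false)
    · exact .gameOver b G (fun e he => hex ⟨e, he⟩) (hend G hI (fun e he => hex ⟨e, he⟩))

end AuxMore

lemma endgame {V : Type*} [Fintype V] (m : ℕ) (hm : 1 ≤ m) (U W : Set V)
    (hdisj : Disjoint U W) (w1 w2 u : V) (hw1 : w1 ∈ W) (hw2 : w2 ∈ W) (hww : w1 ≠ w2)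
    (hu : u ∈ U) (H : SimpleGraph V) (N : Set (Sym2 V)) (hN : IsEM H N)
    (hNcard : N.ncard = m) (hNU : ESupp N ⊆ U)
    (huw1 : H.Adj u w1) (huw2 : H.Adj u w2)
    (hH : ¬ hasMatchingOfSize (m + 1) H)
    (hsat : ∀ e, ¬ legalMove (hasMatchingOfSize (m + 1)) H e) :
    ∀ w ∈ W, ∃ x ∈ U, H.Adj w x := by
  classical
  intro w hw
  by_contra hcon
  push_neg at hcon
  have hWU : ∀ x, x ∈ W → x ∉ U := fun x hxW hxU =>
    Set.disjoint_left.mp hdisj hxU hxW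
  have noK : ∀ s, IsEM H s → s.ncard ≠ m + 1 := fun s hs hc =>
    hH ((hasMatchingOfSize_iff_em H (m + 1)).mpr ⟨s, hs, hc⟩)
  have aug : ∀ s, IsEM H s → s.ncard = m → ∀ x y, H.Adj x y →
      x ∉ ESupp s → y ∉ ESupp s → False := by
    intro s hs hc x y hxy hxs hys
    have hnotmem : s(x, y) ∉ s := fun h => hxs ⟨_, h, Sym2.mem_mk_left _ _⟩
    refine noK (insert s(x, y) s) ⟨?_, ?_⟩ ?_
    · exact Set.insert_subset ((SimpleGraph.mem_edgeSet H).mpr hxy) hs.sub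
    · rintro e he f hf hne v hv hvf
      rcases he with rfl | he <;> rcases hf with rfl | hf
      · exact hne rfl
      · rcases Sym2.mem_iff.mp hv with h | h
        · exact hxs ⟨f, hf, h ▸ hvf⟩
        · exact hys ⟨f, hf, h ▸ hvf⟩
      · rcases Sym2.mem_iff.mp hvf with h | h
        · exact hxs ⟨e, he, h ▸ hv⟩
        · exact hys ⟨e, he, h ▸ hv⟩
      · exact hs.disj e he f hf hne v hv hvf
    · rw [Set.ncard_insert_of_notMem hnotmem (Set.toFinite _), hc]
  have hNw1 : w1 ∉ ESupp N := fun h => hWU w1 hw1 (hNU h)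
  have hNw2 : w2 ∉ ESupp N := fun h => hWU w2 hw2 (hNU h)
  have huN : u ∈ ESupp N := by
    by_contra h
    exact aug N hN hNcard u w1 huw1 h hNw1
  have hwu : ¬ H.Adj w u := hcon u hu
  have hwne : w ≠ u := fun h => hWU w hw (h ▸ hu)
  have hdiag : ¬ (s(w, u)).IsDiag := fun h => hwne (Sym2.mk_isDiag_iff.mp h)
  have hP : hasMatchingOfSize (m + 1) (addEdge H s(w, u)) := by
    by_contra h
    exact hsat s(w, u) ⟨hdiag, fun hmem => hwu ((SimpleGraph.mem_edgeSet H).mp hmem), h⟩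
  obtain ⟨sP, hsP, hsPcard⟩ := (hasMatchingOfSize_iff_em _ _).mp hP
  have hedge : (addEdge H s(w, u)).edgeSet = insert s(w, u) H.edgeSet := addEdge_edgeSet hdiag
  have hsub' : ∀ e ∈ sP, e ≠ s(w, u) → e ∈ H.edgeSet := by
    intro e he hne
    have := hsP.sub he
    rw [hedge] at this
    rcases this with rfl | h
    · exact absurd rfl hne
    · exact h
  have he₀ : s(w, u) ∈ sP := by
    by_contra h
    exact noK sP ⟨fun e he => hsub' e he (fun hEq => h (hEq ▸ he)), hsP.disj⟩ hsPcard
  set M0 := sP \ {s(w, u)} with hM0def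
  have hM0ne : ∀ e ∈ M0, e ≠ s(w, u) := fun e he h => he.2 (by simp [h])
  have hM0 : IsEM H M0 := ⟨fun e he => hsub' e he.1 (hM0ne e he),
    fun e he f hf => hsP.disj e he.1 f hf.1⟩
  have hM0card : M0.ncard = m := by
    rw [hM0def, Set.ncard_diff_singleton_of_mem he₀, hsPcard]
    omega
  have hM0u : u ∉ ESupp M0 := by
    rintro ⟨e, he, hue⟩
    exact hsP.disj e he.1 s(w, u) he₀ (hM0ne e he) u hue (Sym2.mem_mk_right w u)
  -- extremal choice
  set SS : Set (Set (Sym2 V)) := {s | IsEM H s ∧ s.ncard = m ∧ u ∉ ESupp s} with hSS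
  set Φ : Set (Sym2 V) → ℕ := fun s => (ESupp s ∩ ESupp N).ncard + (s ∩ N).ncard with hΦ
  have hM0SS : M0 ∈ SS := ⟨hM0, hM0card, hM0u⟩
  have hbdd : BddAbove (Φ '' SS) := by
    refine ⟨(Set.univ : Set V).ncard + (Set.univ : Set (Sym2 V)).ncard, ?_⟩
    rintro x ⟨s, -, rfl⟩
    exact add_le_add (Set.ncard_le_ncard (Set.subset_univ _) (Set.toFinite _))
      (Set.ncard_le_ncard (Set.subset_univ _) (Set.toFinite _))
  obtain ⟨M, hMSS, hMΦ⟩ := Nat.sSup_mem (⟨Φ M0, M0, hM0SS, rfl⟩ : (Φ '' SS).Nonempty) hbdd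
  have hmax : ∀ s ∈ SS, Φ s ≤ Φ M := by
    intro s hs
    rw [hMΦ]
    exact le_csSup hbdd ⟨s, hs, rfl⟩
  obtain ⟨hMem, hMcard, hMu⟩ := hMSS
  -- the coverage claim
  have hcov : ESupp N \ {u} ⊆ ESupp M := by
    rintro y ⟨hyN, hyu⟩
    by_contra hyM
    obtain ⟨e, heN, hye⟩ := hyN
    obtain ⟨z, rfl, hyz⟩ := edge_pair hN heN hye
    have hAdj : H.Adj y z := (SimpleGraph.mem_edgeSet H).mp (hN.sub heN)
    by_cases hzM : z ∈ ESupp M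
    · obtain ⟨f, hfM, hzf⟩ := hzM
      obtain ⟨q, rfl, hzq⟩ := edge_pair hMem hfM hzf
      have hqM : q ∈ ESupp M := ⟨_, hfM, Sym2.mem_mk_right _ _⟩
      have hzM' : z ∈ ESupp M := ⟨_, hfM, Sym2.mem_mk_left _ _⟩
      have hyq : y ≠ q := fun h => hyM (h ▸ hqM)
      have hyMnot : ∀ g ∈ M, y ∉ g := fun g hg hyg => hyM ⟨g, hg, hyg⟩
      have hnewM : s(y, z) ∉ M := fun h => hyMnot _ h (Sym2.mem_mk_left _ _)
      have hzu : z ≠ u := fun h => hMu (h ▸ hzM')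
      have hfN : s(z, q) ∉ N := by
        intro hf
        have hne : s(y, z) ≠ s(z, q) := by
          intro h
          have hmem : y ∈ s(z, q) := h ▸ Sym2.mem_mk_left y z
          rcases Sym2.mem_iff.mp hmem with h' | h'
          · exact hyz h'
          · exact hyq h'
        exact hN.disj _ heN _ hf hne z (Sym2.mem_mk_right y z) (Sym2.mem_mk_left z q)
      set M' := insert s(y, z) (M \ {s(z, q)}) with hM'def
      have hfsub : M \ {s(z, q)} ⊆ M := Set.diff_subset
      have hnotnew : ∀ g ∈ M \ {s(z, q)}, ∀ v, v ∈ s(y, z) → v ∉ g := by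
        rintro g hg v hv hvg
        have hgM := hfsub hg
        have hgne : g ≠ s(z, q) := fun h => hg.2 (by simp [h])
        rcases Sym2.mem_iff.mp hv with h | h
        · exact hyMnot g hgM (h ▸ hvg)
        · exact hMem.disj _ hfM _ hgM (fun h' => hgne h'.symm) z
            (Sym2.mem_mk_left _ _) (h ▸ hvg)
      have hM'EM : IsEM H M' := by
        refine ⟨?_, ?_⟩
        · exact Set.insert_subset ((SimpleGraph.mem_edgeSet H).mpr hAdj)
            (fun g hg => hMem.sub (hfsub hg))
        · rintro a ha b hb hne v hv hvb
          rcases ha with rfl | ha <;> rcases hb with rfl | hb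
          · exact hne rfl
          · exact hnotnew b hb v hv hvb
          · exact hnotnew a ha v hvb hv
          · exact hMem.disj a (hfsub ha) b (hfsub hb) hne v hv hvb
      have hM'card : M'.ncard = m := by
        have h1 : s(y, z) ∉ M \ {s(z, q)} := fun h => hnewM (hfsub h)
        rw [hM'def, Set.ncard_insert_of_notMem h1 (Set.toFinite _),
          Set.ncard_diff_singleton_of_mem hfM, hMcard]
        omega
      have hM'u : u ∉ ESupp M' := by
        rintro ⟨g, hg, hug⟩
        rcases hg with rfl | hg
        · rcases Sym2.mem_iff.mp hug with h | h
          · exact hyu (Set.mem_singleton_iff.mpr h.symm)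
          · exact hzu h.symm
        · exact hMu ⟨g, hfsub hg, hug⟩
      have hterm2 : M' ∩ N = insert s(y, z) (M ∩ N) := by
        ext g
        simp only [hM'def, Set.mem_inter_iff, Set.mem_insert_iff, Set.mem_diff,
          Set.mem_singleton_iff]
        constructor
        · rintro ⟨rfl | ⟨hgM, hgne⟩, hgN⟩
          · exact Or.inl rfl
          · exact Or.inr ⟨hgM, hgN⟩
        · rintro (rfl | ⟨hgM, hgN⟩)
          · exact ⟨Or.inl rfl, heN⟩
          · exact ⟨Or.inr ⟨hgM, fun h => hfN (h ▸ hgN)⟩, hgN⟩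
      have ht2 : (M' ∩ N).ncard = (M ∩ N).ncard + 1 := by
        rw [hterm2, Set.ncard_insert_of_notMem (fun h => hnewM h.1) (Set.toFinite _)]
      have hsub1 : insert y ((ESupp M ∩ ESupp N) \ {q}) ⊆ ESupp M' ∩ ESupp N := by
        rintro v (h | ⟨⟨hvM, hvN⟩, hvq⟩)
        · exact ⟨⟨s(y, z), Set.mem_insert _ _, by rw [h]; exact Sym2.mem_mk_left _ _⟩,
            ⟨_, heN, by rw [h]; exact Sym2.mem_mk_left _ _⟩⟩
        · refine ⟨?_, hvN⟩
          obtain ⟨g, hgM, hvg⟩ := hvM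
          by_cases hgf : g = s(z, q)
          · subst hgf
            rcases Sym2.mem_iff.mp hvg with h | h
            · exact ⟨s(y, z), Set.mem_insert _ _, by rw [h]; exact Sym2.mem_mk_right _ _⟩
            · exact absurd (by simp [h]) hvq
          · exact ⟨g, Set.mem_insert_of_mem _ ⟨hgM, hgf⟩, hvg⟩
      have hyA : y ∉ (ESupp M ∩ ESupp N) \ {q} := fun h => hyM h.1.1
      have ht1 : (ESupp M ∩ ESupp N).ncard ≤ (ESupp M' ∩ ESupp N).ncard := by
        have hstep : ESupp M ∩ ESupp N ⊆ insert q ((ESupp M ∩ ESupp N) \ {q}) := by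
          intro v hv
          by_cases h : v = q
          · exact Or.inl h
          · exact Or.inr ⟨hv, h⟩
        calc (ESupp M ∩ ESupp N).ncard
            ≤ (insert q ((ESupp M ∩ ESupp N) \ {q})).ncard :=
              Set.ncard_le_ncard hstep (Set.toFinite _)
          _ ≤ ((ESupp M ∩ ESupp N) \ {q}).ncard + 1 := Set.ncard_insert_le _ _
          _ = (insert y ((ESupp M ∩ ESupp N) \ {q})).ncard :=
              (Set.ncard_insert_of_notMem hyA (Set.toFinite _)).symm
          _ ≤ _ := Set.ncard_le_ncard hsub1 (Set.toFinite _)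
      have hfinal := hmax M' ⟨hM'EM, hM'card, hM'u⟩
      simp only [hΦ] at hfinal
      rw [ht2] at hfinal
      omega
    · exact aug M hMem hMcard y z hAdj hyM hzM
  -- final counting
  have hw1M : w1 ∈ ESupp M := by
    by_contra h
    exact aug M hMem hMcard u w1 huw1 hMu h
  have hw2M : w2 ∈ ESupp M := by
    by_contra h
    exact aug M hMem hMcard u w2 huw2 hMu h
  have hsuppM : (ESupp M).ncard = 2 * m := by rw [esupp_ncard hMem, hMcard]
  have hsuppN : (ESupp N).ncard = 2 * m := by rw [esupp_ncard hN, hNcard]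
  have hAcard : (ESupp N \ {u}).ncard = 2 * m - 1 := by
    rw [Set.ncard_diff_singleton_of_mem huN, hsuppN]
  have hdiffcard : (ESupp M \ (ESupp N \ {u})).ncard = 1 := by
    rw [Set.ncard_diff hcov (Set.toFinite _), hsuppM, hAcard]
    omega
  have hw1d : w1 ∈ ESupp M \ (ESupp N \ {u}) := ⟨hw1M, fun h => hNw1 h.1⟩
  have hw2d : w2 ∈ ESupp M \ (ESupp N \ {u}) := ⟨hw2M, fun h => hNw2 h.1⟩
  have hpairsub : ({w1, w2} : Set V) ⊆ ESupp M \ (ESupp N \ {u}) := by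
    rintro x (rfl | rfl)
    exacts [hw1d, hw2d]
  have hle := Set.ncard_le_ncard hpairsub (Set.toFinite _)
  rw [Set.ncard_pair hww, hdiffcard] at hle
  omega

/-- Let `k ≥ 2` and let `G0` be a graph whose vertex set is partitioned as `U ∪ W` with
`ν(G0) = ν(G0[U]) = k - 1`, and suppose there are distinct `w1, w2 ∈ W` of degree
exactly `1` in `G0` and a vertex `u ∈ U` with `u w1, u w2 ∈ E(G0)`. Then in the
saturation game `(G0, M_k)`, Max, moving second, can ensure that in the final graph
every vertex of `W` has a neighbor in `U`. -/
theorem statement_19 {V : Type*} [Fintype V] (k : ℕ) (hk : 2 ≤ k)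
    (G0 : SimpleGraph V) (U W : Set V)
    (hUW : U ∪ W = Set.univ) (hdisj : Disjoint U W)
    (hnu : matchingNumber G0 = k - 1)
    (hnuU : matchingNumber (G0.induce U) = k - 1)
    (w1 w2 : V) (hw1 : w1 ∈ W) (hw2 : w2 ∈ W) (hww : w1 ≠ w2) (u : V) (hu : u ∈ U)
    (hdw1 : (G0.neighborSet w1).ncard = 1) (hdw2 : (G0.neighborSet w2).ncard = 1)
    (huw1 : G0.Adj u w1) (huw2 : G0.Adj u w2) :
    GameEnsures (hasMatchingOfSize k)
      (fun G : SimpleGraph V => ∀ w ∈ W, ∃ x ∈ U, G.Adj w x)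
      false G0 := by
  classical
  obtain ⟨m, hkm⟩ : ∃ m, k = m + 1 := ⟨k - 1, by omega⟩
  subst hkm
  have hm : 1 ≤ m := by omega
  obtain ⟨s₀, hs₀, hcard₀⟩ := exists_em_matchingNumber (G0.induce U)
  obtain ⟨hNem, hNcard, hNU⟩ := induce_em hs₀
  have hNcard' : (Sym2.map Subtype.val '' s₀).ncard = m := by
    rw [hNcard, hcard₀, hnuU]
    omega
  have hG0 : ¬ hasMatchingOfSize (m + 1) G0 :=
    not_hasMatchingOfSize_of_lt (by rw [hnu]; omega)
  refine game_of_invariant (hasMatchingOfSize (m + 1)) _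
    (fun G => G0 ≤ G ∧ ¬ hasMatchingOfSize (m + 1) G) ?_ ?_
    ((G0.edgeSetᶜ).ncard) G0 le_rfl ⟨le_rfl, hG0⟩ false
  · intro G e hI hl
    exact ⟨le_trans hI.1 le_sup_left, hl.2.2⟩
  · intro G hI hend
    exact endgame m hm U W hdisj w1 w2 u hw1 hw2 hww hu G (Sym2.map Subtype.val '' s₀)
      (hNem.mono hI.1) hNcard' hNU (hI.1 huw1) (hI.1 huw2) hI.2 hend
end
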